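/- Gurvits' one-variable inequality: Suppose p is a-hyperbolic of degree m ≥ 2 with Gårding cone Γ, and let b ∈ Γ. Then ((m−1)^{m−1}/mᵐ) · inf_{t>0} p(a + t·b)/t ≤ (1/m)·p′_b(a), where p′_b(a) = (d/ds) p(a + s·b)|_{s=0}. Equality holds if and only if all the a-eigenvalues of b are equal. -/

import Mathlib

open MvPolynomial

/-- `lam : Fin m → ℝ` is a tuple of `a`-eigenvalues of `x` for the polynomial `p`:
`p(t·a + x) = p(a)·∏ₖ (t + lamₖ)` for all real `t`. -/
def IsEigen {n : ℕ} (m : ℕ) (p : MvPolynomial (Fin n) ℝ) (a x : Fin n → ℝ)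
    (lam : Fin m → ℝ) : Prop :=
  ∀ t : ℝ, eval (t • a + x) p = eval a p * ∏ k, (t + lam k)

/-- `p` is `a`-hyperbolic (of degree `m`): `p(a) > 0` and every `x` has `m` real
`a`-eigenvalues. -/
def IsHyperbolic {n : ℕ} (m : ℕ) (p : MvPolynomial (Fin n) ℝ) (a : Fin n → ℝ) : Prop :=
  0 < eval a p ∧ ∀ x : Fin n → ℝ, ∃ lam : Fin m → ℝ, IsEigen m p a x lam

/-- The open Gårding cone: the set of `x` all of whose `a`-eigenvalues are positive. -/
def GardingCone {n : ℕ} (m : ℕ) (p : MvPolynomial (Fin n) ℝ) (a : Fin n → ℝ) :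
    Set (Fin n → ℝ) :=
  {x | ∃ lam : Fin m → ℝ, IsEigen m p a x lam ∧ ∀ k, 0 < lam k}

-- The ordered (non-decreasing) arrangement `λ↑` of the `a`-eigenvalues of `x`
-- (defined via choice; for a hyperbolic `p` the monotone arrangement exists and is unique).
open scoped Classical in
noncomputable def ordEig {n : ℕ} (m : ℕ) (p : MvPolynomial (Fin n) ℝ) (a x : Fin n → ℝ) :
    Fin m → ℝ :=
  if h : ∃ lam : Fin m → ℝ, Monotone lam ∧ IsEigen m p a x lam then h.choose
  else fun _ => 0

/-- The directional derivative `p'_b(a) = (d/ds) p(a + s·b) |_{s=0}`. -/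
noncomputable def dirDeriv {n : ℕ} (p : MvPolynomial (Fin n) ℝ) (a b : Fin n → ℝ) : ℝ :=
  deriv (fun s : ℝ => eval (a + s • b) p) 0


open Finset


lemma eval_smul_of_homog {n m : ℕ} {p : MvPolynomial (Fin n) ℝ} (hp : p.IsHomogeneous m)
    (c : ℝ) (x : Fin n → ℝ) : eval (c • x) p = c ^ m * eval x p := by
  rw [eval_eq', eval_eq', Finset.mul_sum]
  refine Finset.sum_congr rfl fun d hd => ?_
  have hw : Finsupp.weight 1 d = m := hp (MvPolynomial.mem_support_iff.mp hd)
  have hdeg : Finsupp.degree d = m := by rw [Finsupp.degree_eq_weight_one]; exact hw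
  have hsum : ∑ i, d i = m := by
    rw [← hdeg, Finsupp.degree]
    exact (Finset.sum_subset (Finset.subset_univ _)
      (fun i _ hi => Finsupp.notMem_support_iff.mp hi)).symm
  have : ∏ i, (c • x) i ^ d i = c ^ m * ∏ i, x i ^ d i := by
    simp only [Pi.smul_apply, smul_eq_mul, mul_pow]
    rw [Finset.prod_mul_distrib, Finset.prod_pow_eq_pow_sum, hsum]
  rw [this]; ring

lemma key_id {n m : ℕ} {p : MvPolynomial (Fin n) ℝ} (hp : p.IsHomogeneous m)
    {a b : Fin n → ℝ} {lam : Fin m → ℝ} (heig : IsEigen m p a b lam) (s : ℝ) :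
    eval (a + s • b) p = eval a p * ∏ k, (1 + s * lam k) := by
  rcases eq_or_ne s 0 with rfl | hs
  · simp
  · have h1 : a + s • b = s • (s⁻¹ • a + b) := by
      rw [smul_add, smul_smul, mul_inv_cancel₀ hs, one_smul]
    rw [h1, eval_smul_of_homog hp, heig s⁻¹]
    have h2 : ∀ k : Fin m, 1 + s * lam k = s * (s⁻¹ + lam k) := fun k => by
      field_simp
    calc s ^ m * (eval a p * ∏ k, (s⁻¹ + lam k))
        = eval a p * ((∏ _k : Fin m, s) * ∏ k, (s⁻¹ + lam k)) := by
          rw [Finset.prod_const]; simp [Finset.card_univ]; ring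
      _ = eval a p * ∏ k, (s * (s⁻¹ + lam k)) := by rw [Finset.prod_mul_distrib]
      _ = eval a p * ∏ k, (1 + s * lam k) := by
          rw [Finset.prod_congr rfl fun k _ => (h2 k).symm]

lemma dirDeriv_eq {n m : ℕ} {p : MvPolynomial (Fin n) ℝ} (hp : p.IsHomogeneous m)
    {a b : Fin n → ℝ} {lam : Fin m → ℝ} (heig : IsEigen m p a b lam) :
    dirDeriv p a b = eval a p * ∑ k, lam k := by
  unfold dirDeriv
  have hfun : (fun s : ℝ => eval (a + s • b) p)
      = fun s => eval a p * ∏ k, (1 + s * lam k) :=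
    funext (key_id hp heig)
  rw [hfun]
  have h1 : ∀ k ∈ Finset.univ, HasDerivAt (fun s : ℝ => 1 + s * lam k) (lam k) (0:ℝ) := by
    intro k _
    simpa using ((hasDerivAt_id (0:ℝ)).mul_const (lam k)).const_add 1
  have h2 := (HasDerivAt.finset_prod h1).const_mul (eval a p)
  have h3 := h2.deriv
  simpa using h3



lemma amgm {m : ℕ} (hm : 0 < m) (v : Fin m → ℝ) (hv : ∀ i, 0 ≤ v i) :
    ∏ i, v i ≤ ((∑ i, v i) / m) ^ m := by
  have hM : (0:ℝ) < m := Nat.cast_pos.mpr hm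
  have h := Real.geom_mean_le_arith_mean_weighted Finset.univ (fun _ => 1/(m:ℝ)) v
      (fun i _ => by positivity)
      (by rw [Finset.sum_const, Finset.card_univ, Fintype.card_fin, nsmul_eq_mul]; field_simp)
      (fun i _ => hv i)
  have hG : (0:ℝ) ≤ ∏ i, v i ^ (1/(m:ℝ)) :=
    Finset.prod_nonneg fun i _ => Real.rpow_nonneg (hv i) _
  have h2 := pow_le_pow_left₀ hG h m
  calc ∏ i, v i = (∏ i, v i ^ (1/(m:ℝ))) ^ m := by
        rw [← Finset.prod_pow]
        refine (Finset.prod_congr rfl fun i _ => ?_).symm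
        rw [← Real.rpow_natCast (v i ^ (1/(m:ℝ))) m, ← Real.rpow_mul (hv i),
          one_div, inv_mul_cancel₀ (ne_of_gt hM), Real.rpow_one]
    _ ≤ (∑ i, 1/(m:ℝ) * v i) ^ m := h2
    _ = ((∑ i, v i) / m) ^ m := by rw [← Finset.mul_sum]; congr 1; field_simp

lemma amgm_strict {m : ℕ} (hm : 2 ≤ m) (v : Fin m → ℝ) (hv : ∀ i, 0 < v i)
    {j k : Fin m} (hjk : v j ≠ v k) : ∏ i, v i < ((∑ i, v i) / m) ^ m := by
  classical
  have hjk' : j ≠ k := fun h => hjk (by rw [h])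
  set z : ℝ := (v j + v k) / 2 with hz
  set w : Fin m → ℝ := Function.update (Function.update v j z) k z with hw
  have hzpos : 0 < z := by have := hv j; have := hv k; positivity
  have hwpos : ∀ i, 0 < w i := by
    intro i
    by_cases hik : i = k
    · simp [hw, hik, hzpos]
    · by_cases hij : i = j
      · subst hij
        rw [hw, Function.update_of_ne hik, Function.update_self]
        exact hzpos
      · simp [hw, Function.update_of_ne hik, Function.update_of_ne hij, hv i]
  have hjmem : j ∈ (Finset.univ : Finset (Fin m)).erase k := by
    simp [hjk']
  have hsum : ∑ i, w i = ∑ i, v i := by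
    rw [hw, Finset.sum_update_of_mem (Finset.mem_univ k), ← Finset.erase_eq,
      Finset.sum_update_of_mem hjmem, ← Finset.erase_eq,
      show (∑ i, v i) = v k + ∑ i ∈ Finset.univ.erase k, v i from
        (Finset.add_sum_erase _ _ (Finset.mem_univ k)).symm,
      show (∑ i ∈ Finset.univ.erase k, v i)
          = v j + ∑ i ∈ (Finset.univ.erase k).erase j, v i from
        (Finset.add_sum_erase _ _ hjmem).symm]
    ring
  have hR : 0 < ∏ i ∈ (Finset.univ.erase k).erase j, v i :=
    Finset.prod_pos fun i _ => hv i
  have hprodlt : ∏ i, v i < ∏ i, w i := by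
    rw [hw, Finset.prod_update_of_mem (Finset.mem_univ k), ← Finset.erase_eq,
      Finset.prod_update_of_mem hjmem, ← Finset.erase_eq,
      show (∏ i, v i) = v k * ∏ i ∈ Finset.univ.erase k, v i from
        (Finset.mul_prod_erase _ _ (Finset.mem_univ k)).symm,
      show (∏ i ∈ Finset.univ.erase k, v i)
          = v j * ∏ i ∈ (Finset.univ.erase k).erase j, v i from
        (Finset.mul_prod_erase _ _ hjmem).symm]
    have h0 : 0 < (v j - v k) * (v j - v k) := mul_self_pos.mpr (sub_ne_zero.mpr hjk)
    have hvjk : v j * v k < z * z := by nlinarith [h0]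
    nlinarith [hR, hv j, hv k, hzpos]
  calc ∏ i, v i < ∏ i, w i := hprodlt
    _ ≤ ((∑ i, w i) / m) ^ m := amgm (by omega) w fun i => (hwpos i).le
    _ = ((∑ i, v i) / m) ^ m := by rw [hsum]



lemma pow_split {m : ℕ} (hm : 2 ≤ m) (r : ℝ) : r ^ m = r ^ (m - 1) * r := by
  conv_lhs => rw [← Nat.sub_add_cancel (show 1 ≤ m by omega)]
  rw [pow_succ]

lemma bern {m : ℕ} (hm : 2 ≤ m) {u : ℝ} (hu : 0 < u) :
    (m:ℝ) ^ m * u ≤ (1 + u) ^ m * ((m:ℝ) - 1) ^ (m - 1) := by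
  have hM2 : (2:ℝ) ≤ (m:ℝ) := by exact_mod_cast hm
  have hM : (0:ℝ) < m := by linarith
  have hr : (0:ℝ) < (m:ℝ) - 1 := by linarith
  set r : ℝ := (m:ℝ) - 1 with hrdef
  set y : ℝ := (r * u - 1) / (m:ℝ) with hydef
  have hy : (-2:ℝ) ≤ y := by
    rw [hydef, le_div_iff₀ hM]
    nlinarith [mul_pos hr hu]
  have hb := one_add_mul_le_pow hy m
  have h1 : 1 + (m:ℝ) * y = r * u := by
    rw [hydef]; field_simp; ring
  rw [h1] at hb
  -- hb : r * u ≤ (1 + y) ^ m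
  have hiy : (1 + u) * r = (m:ℝ) * (1 + y) := by
    rw [hydef]; field_simp; ring
  have key : (m:ℝ) ^ m * u * r ≤ (1 + u) ^ m * r ^ m := by
    calc (m:ℝ) ^ m * u * r = (m:ℝ) ^ m * (r * u) := by ring
      _ ≤ (m:ℝ) ^ m * (1 + y) ^ m := by
          exact mul_le_mul_of_nonneg_left hb (by positivity)
      _ = ((m:ℝ) * (1 + y)) ^ m := by rw [mul_pow]
      _ = ((1 + u) * r) ^ m := by rw [hiy]
      _ = (1 + u) ^ m * r ^ m := by rw [mul_pow]
  rw [pow_split hm r] at key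
  have := (mul_le_mul_iff_of_pos_right hr).mp (by linarith [key] :
    (m:ℝ) ^ m * u * r ≤ (1 + u) ^ m * r ^ (m-1) * r)
  linarith [this]

lemma val_comp {m : ℕ} (hm : 2 ≤ m) {l : ℝ} (hl : 0 < l) :
    (1 + 1 / (((m:ℝ) - 1) * l) * l) ^ m / (1 / (((m:ℝ) - 1) * l))
      = (m:ℝ) ^ m * l / ((m:ℝ) - 1) ^ (m - 1) := by
  have hM2 : (2:ℝ) ≤ (m:ℝ) := by exact_mod_cast hm
  have hr : (0:ℝ) < (m:ℝ) - 1 := by linarith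
  have h1 : 1 + 1 / (((m:ℝ) - 1) * l) * l = (m:ℝ) / ((m:ℝ) - 1) := by
    field_simp; ring
  rw [h1, div_pow, one_div, pow_split hm ((m:ℝ) - 1)]
  have h2 : ((m:ℝ) - 1) ^ (m-1) ≠ 0 := by positivity
  field_simp

lemma master {n m : ℕ} (hm : 2 ≤ m) {p : MvPolynomial (Fin n) ℝ} (hp : p.IsHomogeneous m)
    {a b : Fin n → ℝ} (hpa : 0 < eval a p) {lam : Fin m → ℝ}
    (heig : IsEigen m p a b lam) (hpos : ∀ k, 0 < lam k) :
    (((m - 1 : ℝ) ^ (m - 1) / (m : ℝ) ^ m) *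
        sInf ((fun t : ℝ => eval (a + t • b) p / t) '' Set.Ioi (0 : ℝ))
      ≤ (1/(m:ℝ)) * (eval a p * ∑ k, lam k))
    ∧ ((∃ j k : Fin m, lam j ≠ lam k) →
      ((m - 1 : ℝ) ^ (m - 1) / (m : ℝ) ^ m) *
        sInf ((fun t : ℝ => eval (a + t • b) p / t) '' Set.Ioi (0 : ℝ))
      < (1/(m:ℝ)) * (eval a p * ∑ k, lam k))
    ∧ ((∀ j k : Fin m, lam j = lam k) →
      ((m - 1 : ℝ) ^ (m - 1) / (m : ℝ) ^ m) *
        sInf ((fun t : ℝ => eval (a + t • b) p / t) '' Set.Ioi (0 : ℝ))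
      = (1/(m:ℝ)) * (eval a p * ∑ k, lam k)) := by
  classical
  have hM2 : (2:ℝ) ≤ (m:ℝ) := by exact_mod_cast hm
  have hM : (0:ℝ) < m := by linarith
  have hr : (0:ℝ) < (m:ℝ) - 1 := by linarith
  have hrp : (0:ℝ) < ((m:ℝ) - 1) ^ (m - 1) := by positivity
  have hC : (0:ℝ) < ((m:ℝ) - 1) ^ (m - 1) / (m:ℝ) ^ m := by positivity
  set C : ℝ := ((m:ℝ) - 1) ^ (m - 1) / (m:ℝ) ^ m with hCdef
  set f : ℝ → ℝ := fun t => eval (a + t • b) p / t with hf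
  set S := f '' Set.Ioi (0:ℝ) with hS
  have hfe : ∀ t : ℝ, f t = eval a p * (∏ k, (1 + t * lam k)) / t := fun t => by
    rw [hf]; dsimp only; rw [key_id hp heig t]
  have hvpos : ∀ t : ℝ, 0 < t → ∀ k : Fin m, 0 < 1 + t * lam k := fun t ht k => by
    have := hpos k; positivity
  have hfpos : ∀ t : ℝ, 0 < t → 0 < f t := fun t ht => by
    rw [hfe]
    have h1 : 0 < ∏ k, (1 + t * lam k) := Finset.prod_pos fun k _ => hvpos t ht k
    positivity
  have hbdd : BddBelow S := by
    refine ⟨0, fun y hy => ?_⟩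
    obtain ⟨t, ht, rfl⟩ := hy
    exact (hfpos t ht).le
  have hne : S.Nonempty := ⟨f 1, ⟨1, by norm_num, rfl⟩⟩
  have hsumpos : 0 < ∑ k, lam k := by
    have : Nonempty (Fin m) := ⟨⟨0, by omega⟩⟩
    exact Finset.sum_pos (fun k _ => hpos k) Finset.univ_nonempty
  set μ : ℝ := (∑ k, lam k) / (m:ℝ) with hμdef
  have hμ : 0 < μ := by positivity
  set t₀ : ℝ := 1 / (((m:ℝ) - 1) * μ) with ht₀def
  have ht₀ : 0 < t₀ := by positivity
  have hmean : (∑ k, (1 + t₀ * lam k)) / (m:ℝ) = 1 + t₀ * μ := by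
    rw [Finset.sum_add_distrib, ← Finset.mul_sum, Finset.sum_const, Finset.card_univ,
      Fintype.card_fin, nsmul_eq_mul, mul_one, hμdef]
    field_simp
  have hAM : ∏ k, (1 + t₀ * lam k) ≤ (1 + t₀ * μ) ^ m := by
    have := amgm (show 0 < m by omega) (fun k => 1 + t₀ * lam k)
      (fun k => (hvpos t₀ ht₀ k).le)
    rwa [hmean] at this
  have hval : (1 + t₀ * μ) ^ m / t₀ = (m:ℝ) ^ m * μ / ((m:ℝ) - 1) ^ (m - 1) := by
    rw [ht₀def]; exact val_comp hm hμ
  have hCeq : C * (eval a p * ((m:ℝ) ^ m * μ / ((m:ℝ) - 1) ^ (m - 1)))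
      = (1/(m:ℝ)) * (eval a p * ∑ k, lam k) := by
    rw [hCdef, hμdef]
    field_simp
  have hft₀ : f t₀ ≤ eval a p * ((m:ℝ) ^ m * μ / ((m:ℝ) - 1) ^ (m - 1)) := by
    rw [hfe, ← hval, mul_div_assoc]
    gcongr
  have hinf_le : sInf S ≤ f t₀ := csInf_le hbdd ⟨t₀, Set.mem_Ioi.mpr ht₀, rfl⟩
  refine ⟨?_, ?_, ?_⟩
  · calc C * sInf S ≤ C * f t₀ := mul_le_mul_of_nonneg_left hinf_le hC.le
      _ ≤ C * (eval a p * ((m:ℝ) ^ m * μ / ((m:ℝ) - 1) ^ (m - 1))) :=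
          mul_le_mul_of_nonneg_left hft₀ hC.le
      _ = (1/(m:ℝ)) * (eval a p * ∑ k, lam k) := hCeq
  · rintro ⟨j, k, hjk⟩
    have hAMs : ∏ k, (1 + t₀ * lam k) < (1 + t₀ * μ) ^ m := by
      have hjk2 : (1 + t₀ * lam j) ≠ (1 + t₀ * lam k) := by
        intro h
        exact hjk (mul_left_cancel₀ ht₀.ne' (by linarith))
      have := amgm_strict hm (fun k => 1 + t₀ * lam k) (hvpos t₀ ht₀) hjk2
      rwa [hmean] at this
    have hft₀' : f t₀ < eval a p * ((m:ℝ) ^ m * μ / ((m:ℝ) - 1) ^ (m - 1)) := by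
      rw [hfe, ← hval, mul_div_assoc]
      exact mul_lt_mul_of_pos_left ((div_lt_div_iff_of_pos_right ht₀).mpr hAMs) hpa
    calc C * sInf S ≤ C * f t₀ := mul_le_mul_of_nonneg_left hinf_le hC.le
      _ < C * (eval a p * ((m:ℝ) ^ m * μ / ((m:ℝ) - 1) ^ (m - 1))) :=
          (mul_lt_mul_iff_right₀ hC).mpr hft₀'
      _ = (1/(m:ℝ)) * (eval a p * ∑ k, lam k) := hCeq
  · intro hall
    set k₀ : Fin m := ⟨0, by omega⟩ with hk₀
    have hlk : 0 < lam k₀ := hpos k₀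
    have hsum3 : ∑ k, lam k = (m:ℝ) * lam k₀ := by
      rw [Finset.sum_congr rfl (fun k _ => hall k k₀), Finset.sum_const, Finset.card_univ,
        Fintype.card_fin, nsmul_eq_mul]
    set t₁ : ℝ := 1 / (((m:ℝ) - 1) * lam k₀) with ht₁def
    have ht₁ : 0 < t₁ := by positivity
    have hprod1 : ∀ t : ℝ, (∏ k, (1 + t * lam k)) = (1 + t * lam k₀) ^ m := by
      intro t
      rw [Finset.prod_congr rfl (fun k _ => by rw [hall k k₀]), Finset.prod_const,
        Finset.card_univ, Fintype.card_fin]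
    set c : ℝ := eval a p * ((m:ℝ) ^ m * lam k₀ / ((m:ℝ) - 1) ^ (m - 1)) with hcdef
    have hmem : c ∈ S := by
      refine ⟨t₁, Set.mem_Ioi.mpr ht₁, ?_⟩
      rw [hfe, hprod1, mul_div_assoc, ht₁def, val_comp hm hlk, hcdef]
    have hlb : ∀ y ∈ S, c ≤ y := by
      rintro y ⟨t, ht, rfl⟩
      rw [Set.mem_Ioi] at ht
      rw [hfe, hprod1, hcdef]
      have hu : 0 < t * lam k₀ := mul_pos ht hlk
      have hb2 := bern hm hu
      rw [mul_div_assoc, mul_div_assoc]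
      apply mul_le_mul_of_nonneg_left _ hpa.le
      rw [← mul_div_assoc, div_le_div_iff₀ hrp ht]
      nlinarith [hb2]
    have hsinf : sInf S = c := le_antisymm (csInf_le hbdd hmem) (le_csInf hne hlb)
    rw [hsinf, hcdef, hsum3, hCdef]
    field_simp

/-- Gurvits' one-variable inequality: for `b ∈ Γ` and `m ≥ 2`,
`((m−1)^{m−1}/mᵐ)·inf_{t>0} p(a + t·b)/t ≤ (1/m)·p′_b(a)`, with equality iff all the
`a`-eigenvalues of `b` are equal. -/
theorem gurvits_one_variable_inequality
    {n m : ℕ} (hm : 2 ≤ m) (p : MvPolynomial (Fin n) ℝ) (hp : p.IsHomogeneous m)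
    (a : Fin n → ℝ) (hhyp : IsHyperbolic m p a)
    (b : Fin n → ℝ) (hb : b ∈ GardingCone m p a) :
    ((m - 1 : ℝ) ^ (m - 1) / (m : ℝ) ^ m) *
        sInf ((fun t : ℝ => eval (a + t • b) p / t) '' Set.Ioi (0 : ℝ)) ≤
      (1 / m : ℝ) * dirDeriv p a b ∧
    (((m - 1 : ℝ) ^ (m - 1) / (m : ℝ) ^ m) *
        sInf ((fun t : ℝ => eval (a + t • b) p / t) '' Set.Ioi (0 : ℝ)) =
      (1 / m : ℝ) * dirDeriv p a b ↔
      ∀ lam : Fin m → ℝ, IsEigen m p a b lam → ∀ j k : Fin m, lam j = lam k) := by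
  obtain ⟨lam0, heig0, hpos0⟩ := hb
  have hpa := hhyp.1
  have dd0 : dirDeriv p a b = eval a p * ∑ k, lam0 k := dirDeriv_eq hp heig0
  have m0 := master hm hp hpa heig0 hpos0
  refine ⟨by rw [dd0]; exact m0.1, ?_, ?_⟩
  · intro hEq lam hl j k
    by_contra hne
    have hprod : ∀ t : ℝ, (∏ i, (t + lam i)) = ∏ i, (t + lam0 i) := fun t =>
      mul_left_cancel₀ (ne_of_gt hpa) ((hl t).symm.trans (heig0 t))
    have hposl : ∀ i, 0 < lam i := by
      intro i
      have h0 : (∏ i2, (-lam i + lam0 i2)) = 0 := by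
        rw [← hprod]
        exact Finset.prod_eq_zero (Finset.mem_univ i) (by ring)
      obtain ⟨i2, _, h2⟩ := Finset.prod_eq_zero_iff.mp h0
      have hli : lam i = lam0 i2 := by linarith
      rw [hli]; exact hpos0 i2
    have ml := master hm hp hpa hl hposl
    have dd1 : dirDeriv p a b = eval a p * ∑ k2, lam k2 := dirDeriv_eq hp hl
    have hlt := ml.2.1 ⟨j, k, hne⟩
    rw [dd1] at hEq
    exact absurd hEq (ne_of_lt hlt)
  · intro hall
    rw [dd0]
    exact m0.2.2 (fun j k => hall lam0 heig0 j k)
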